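/- (Two-point feedback bias bound.) Let (Ξ, ν) be a probability space, F : ℝ^d × Ξ → ℝ with each F(·, ξ) integrable, and let f(x) := E_ξ[F(x, ξ)]. Assume β ≥ 2 with l the largest integer strictly less than β and that f belongs to the Hölder class F_β(L_β). Let δ : ℝ^d → ℝ satisfy |δ(x)| ≤ Δ for all x, let ξ be distributed according to ν independently of (e, r), and define the two-point kernel gradient approximation g̃(x, ξ, e, r) := d (F(x + γ r e, ξ) + δ(x + γ r e) − F(x − γ r e, ξ) − δ(x − γ r e)) K(r) e/(2γ). Then for every x ∈ ℝ^d, ‖E[g̃(x, ξ, e, r)] − ∇f(x)‖₂ ≤ κ_β d L_β γ^{β−1} + κ₁ d Δ/γ. -/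

import Mathlib

open MeasureTheory ProbabilityTheory
open scoped ENNReal

private lemma euclid_coord_le_norm {d : ℕ} (y : EuclideanSpace ℝ (Fin d)) (k : Fin d) :
    |y k| ≤ ‖y‖ := by
  rw [EuclideanSpace.norm_eq, ← Real.sqrt_sq_eq_abs]
  apply Real.sqrt_le_sqrt
  have := Finset.single_le_sum (f := fun i => ‖y i‖ ^ 2)
    (fun i _ => sq_nonneg _) (Finset.mem_univ k)
  simpa [Real.norm_eq_abs, sq_abs] using this

private lemma integral_euclid_coord {Ω : Type*} {m0 : MeasurableSpace Ω} {P : Measure Ω}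
    {d : ℕ} {g : Ω → EuclideanSpace ℝ (Fin d)} (hg : Integrable g P) (i : Fin d) :
    (∫ ω, g ω ∂P) i = ∫ ω, g ω i ∂P := by
  calc (∫ ω, g ω ∂P) i = (EuclideanSpace.proj (𝕜 := ℝ) i) (∫ ω, g ω ∂P) := rfl
    _ = ∫ ω, (EuclideanSpace.proj (𝕜 := ℝ) i) (g ω) ∂P :=
        ((EuclideanSpace.proj (𝕜 := ℝ) i).integral_comp_comm hg).symm
    _ = ∫ ω, g ω i ∂P := rfl

private lemma abs_mul3_bound (c z ψ B W : ℝ) (hz : |z| ≤ B) (hψ : |ψ| ≤ W) (hW : 0 ≤ W) :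
    |c * z * ψ| ≤ |c| * W * B := by
  rw [abs_mul, abs_mul]
  have h1 : |c| * |z| ≤ |c| * B := mul_le_mul_of_nonneg_left hz (abs_nonneg c)
  have hB : (0:ℝ) ≤ B := le_trans (abs_nonneg z) hz
  calc |c| * |z| * |ψ| ≤ (|c| * B) * W :=
      mul_le_mul h1 hψ (abs_nonneg ψ) (mul_nonneg (abs_nonneg c) hB)
    _ = |c| * W * B := by ring

private lemma sphere_moment
    {Ω : Type*} {m0 : MeasurableSpace Ω} (P : Measure Ω) [IsProbabilityMeasure P]
    {d : ℕ} (e : Ω → EuclideanSpace ℝ (Fin d))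
    (he_meas : Measurable e) (he_norm : ∀ ω, ‖e ω‖ = 1)
    (he_unif : ∀ O : EuclideanSpace ℝ (Fin d) ≃ₗᵢ[ℝ] EuclideanSpace ℝ (Fin d),
      Measure.map (fun ω => O (e ω)) P = Measure.map e P)
    (i j : Fin d) :
    ∫ ω, e ω i * e ω j ∂P = if i = j then (d : ℝ)⁻¹ else 0 := by
  have hccoord : ∀ k : Fin d, Continuous (fun y : EuclideanSpace ℝ (Fin d) => y k) :=
    fun k => (EuclideanSpace.proj (𝕜 := ℝ) k).continuous
  have key : ∀ (O : EuclideanSpace ℝ (Fin d) ≃ₗᵢ[ℝ] EuclideanSpace ℝ (Fin d))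
      (ψ : EuclideanSpace ℝ (Fin d) → ℝ), Measurable ψ →
      ∫ ω, ψ (O (e ω)) ∂P = ∫ ω, ψ (e ω) ∂P := by
    intro O ψ hψ
    calc ∫ ω, ψ (O (e ω)) ∂P
        = ∫ y, ψ y ∂(Measure.map (fun ω => O (e ω)) P) :=
          (integral_map (O.continuous.measurable.comp he_meas).aemeasurable
            hψ.aestronglyMeasurable).symm
      _ = ∫ y, ψ y ∂(Measure.map e P) := by rw [he_unif O]
      _ = ∫ ω, ψ (e ω) ∂P := integral_map he_meas.aemeasurable hψ.aestronglyMeasurable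
  have hmeas2 : ∀ k m : Fin d, Measurable (fun y : EuclideanSpace ℝ (Fin d) => y k * y m) :=
    fun k m => ((hccoord k).mul (hccoord m)).measurable
  have hint : ∀ k m : Fin d, Integrable (fun ω => e ω k * e ω m) P := by
    intro k m
    refine Integrable.mono' (integrable_const 1) ((hmeas2 k m).comp he_meas).aestronglyMeasurable
      (Filter.Eventually.of_forall fun ω => ?_)
    have h1 := euclid_coord_le_norm (e ω) k
    have h2 := euclid_coord_le_norm (e ω) m
    rw [he_norm ω] at h1 h2
    calc ‖e ω k * e ω m‖ = |e ω k| * |e ω m| := by rw [Real.norm_eq_abs, abs_mul]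
      _ ≤ 1 * 1 := mul_le_mul h1 h2 (abs_nonneg _) zero_le_one
      _ = 1 := one_mul 1
  by_cases hij : i = j
  · subst hij
    simp only [if_pos rfl]
    have hswap : ∀ k : Fin d, ∫ ω, e ω k * e ω k ∂P = ∫ ω, e ω i * e ω i ∂P := by
      intro k
      have := key (LinearIsometryEquiv.piLpCongrLeft 2 ℝ ℝ (Equiv.swap i k))
        (fun y => y i * y i) (hmeas2 i i)
      rw [← this]
      congr 1
      funext ω
      simp only [LinearIsometryEquiv.piLpCongrLeft_apply, Equiv.piCongrLeft'_apply]
      rw [Equiv.symm_swap, Equiv.swap_apply_left]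
    have hsumsq : ∀ ω, ∑ k : Fin d, e ω k * e ω k = 1 := by
      intro ω
      have h := he_norm ω
      rw [EuclideanSpace.norm_eq] at h
      have h2 : ∑ k, ‖e ω k‖ ^ 2 = 1 := Real.sqrt_eq_one.mp h
      calc ∑ k : Fin d, e ω k * e ω k = ∑ k, ‖e ω k‖ ^ 2 := by
            refine Finset.sum_congr rfl fun k _ => ?_
            rw [Real.norm_eq_abs, sq_abs, sq]
        _ = 1 := h2
    have hsum : ∑ k : Fin d, ∫ ω, e ω k * e ω k ∂P = 1 := by
      rw [← integral_finset_sum _ (fun k _ => hint k k)]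
      simp only [hsumsq]
      simp
    rw [Finset.sum_congr rfl (fun k _ => hswap k)] at hsum
    rw [Finset.sum_const, Finset.card_univ, Fintype.card_fin, nsmul_eq_mul] at hsum
    have hd : 0 < d := i.pos
    have hval : ∫ ω, e ω i * e ω i ∂P = (d:ℝ)⁻¹ :=
      eq_inv_of_mul_eq_one_left (by rw [mul_comm]; exact hsum)
    simpa using hval
  · simp only [if_neg hij]
    have := key (LinearIsometryEquiv.piLpCongrRight 2
        (fun k : Fin d => if k = i then LinearIsometryEquiv.neg ℝ else
          LinearIsometryEquiv.refl ℝ ℝ))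
      (fun y => y i * y j) (hmeas2 i j)
    have hO : ∀ y : EuclideanSpace ℝ (Fin d),
        (LinearIsometryEquiv.piLpCongrRight 2
          (fun k : Fin d => if k = i then LinearIsometryEquiv.neg ℝ else
            LinearIsometryEquiv.refl ℝ ℝ)) y i *
        (LinearIsometryEquiv.piLpCongrRight 2
          (fun k : Fin d => if k = i then LinearIsometryEquiv.neg ℝ else
            LinearIsometryEquiv.refl ℝ ℝ)) y j = -(y i * y j) := by
      intro y
      have hji : ¬ (j = i) := fun h => hij h.symm
      rw [LinearIsometryEquiv.piLpCongrRight_apply]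
      simp only [PiLp.toLp_apply, if_pos rfl, hji, if_false,
        LinearIsometryEquiv.coe_neg, LinearIsometryEquiv.coe_refl]
      simp
    simp only [hO] at this
    rw [integral_neg] at this
    linarith [this]

private lemma sphere_vector_moment
    {Ω : Type*} {m0 : MeasurableSpace Ω} (P : Measure Ω) [IsProbabilityMeasure P]
    {d : ℕ} (e : Ω → EuclideanSpace ℝ (Fin d))
    (he_meas : Measurable e) (he_norm : ∀ ω, ‖e ω‖ = 1)
    (he_unif : ∀ O : EuclideanSpace ℝ (Fin d) ≃ₗᵢ[ℝ] EuclideanSpace ℝ (Fin d),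
      Measure.map (fun ω => O (e ω)) P = Measure.map e P)
    (v : EuclideanSpace ℝ (Fin d)) :
    ∫ ω, (inner ℝ v (e ω) : ℝ) • e ω ∂P = (d : ℝ)⁻¹ • v := by
  have hcont : Continuous (fun y : EuclideanSpace ℝ (Fin d) => (inner ℝ v y : ℝ) • y) :=
    (continuous_const.inner continuous_id).fun_smul continuous_id
  have hInt : Integrable (fun ω => (inner ℝ v (e ω) : ℝ) • e ω) P := by
    refine Integrable.mono' (integrable_const ‖v‖)
      ((hcont.measurable.comp he_meas).aestronglyMeasurable)
      (Filter.Eventually.of_forall fun ω => ?_)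
    rw [norm_smul, he_norm ω, mul_one, Real.norm_eq_abs]
    calc |(inner ℝ v (e ω) : ℝ)| ≤ ‖v‖ * ‖e ω‖ := abs_real_inner_le_norm v (e ω)
      _ = ‖v‖ := by rw [he_norm ω, mul_one]
  have hint : ∀ k m : Fin d, Integrable (fun ω => e ω k * e ω m) P := by
    intro k m
    have hc : Continuous (fun y : EuclideanSpace ℝ (Fin d) => y k * y m) :=
      ((EuclideanSpace.proj (𝕜 := ℝ) k).continuous.mul
        (EuclideanSpace.proj (𝕜 := ℝ) m).continuous)
    refine Integrable.mono' (integrable_const 1) ((hc.measurable.comp he_meas).aestronglyMeasurable)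
      (Filter.Eventually.of_forall fun ω => ?_)
    have h1 := euclid_coord_le_norm (e ω) k
    have h2 := euclid_coord_le_norm (e ω) m
    rw [he_norm ω] at h1 h2
    calc ‖e ω k * e ω m‖ = |e ω k| * |e ω m| := by rw [Real.norm_eq_abs, abs_mul]
      _ ≤ 1 * 1 := mul_le_mul h1 h2 (abs_nonneg _) zero_le_one
      _ = 1 := one_mul 1
  have hcomp : ∀ k : Fin d,
      (∫ ω, (inner ℝ v (e ω) : ℝ) • e ω ∂P) k = (d : ℝ)⁻¹ * v k := by
    intro k
    have hproj := (EuclideanSpace.proj (𝕜 := ℝ) k).integral_comp_comm hInt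
    have hlhs : (∫ ω, (inner ℝ v (e ω) : ℝ) • e ω ∂P) k
        = ∫ ω, (inner ℝ v (e ω) : ℝ) * e ω k ∂P := by
      calc (∫ ω, (inner ℝ v (e ω) : ℝ) • e ω ∂P) k
          = (EuclideanSpace.proj (𝕜 := ℝ) k) (∫ ω, (inner ℝ v (e ω) : ℝ) • e ω ∂P) := rfl
        _ = ∫ ω, (EuclideanSpace.proj (𝕜 := ℝ) k) ((inner ℝ v (e ω) : ℝ) • e ω) ∂P := hproj.symm
        _ = ∫ ω, (inner ℝ v (e ω) : ℝ) * e ω k ∂P := by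
            refine integral_congr_ae (Filter.Eventually.of_forall fun ω => ?_)
            rfl
    rw [hlhs]
    have hexp : ∀ ω, (inner ℝ v (e ω) : ℝ) * e ω k
        = ∑ i : Fin d, v i * (e ω i * e ω k) := by
      intro ω
      rw [PiLp.inner_apply]
      simp only [RCLike.inner_apply, conj_trivial]
      rw [Finset.sum_mul]
      exact Finset.sum_congr rfl fun i _ => by ring
    simp only [hexp]
    rw [integral_finset_sum _ (fun i _ => ((hint i k).const_mul (v i)))]
    have : ∀ i : Fin d, ∫ ω, v i * (e ω i * e ω k) ∂P
        = v i * (if i = k then (d : ℝ)⁻¹ else 0) := by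
      intro i
      rw [integral_const_mul, sphere_moment P e he_meas he_norm he_unif i k]
    simp only [this]
    rw [Finset.sum_congr rfl (fun i _ => mul_ite (i = k) (v i) ((d:ℝ)⁻¹) 0)]
    simp only [mul_zero]
    rw [Finset.sum_ite_eq' Finset.univ k (fun i => v i * (d:ℝ)⁻¹)]
    simp [mul_comm]
  have : ∀ k : Fin d, (∫ ω, (inner ℝ v (e ω) : ℝ) • e ω ∂P) k = ((d : ℝ)⁻¹ • v) k := by
    intro k
    rw [hcomp k]
    simp [PiLp.smul_apply]
  ext k; exact this k

section Steps
variable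
    {Ω : Type*} {m0 : MeasurableSpace Ω} (P : Measure Ω) [IsProbabilityMeasure P]
    {Ξ : Type*} [MeasurableSpace Ξ] (ν : Measure Ξ) [IsProbabilityMeasure ν]
    {d : ℕ} (β : ℝ) (l : ℕ)
    (F : EuclideanSpace ℝ (Fin d) → Ξ → ℝ)
    (f : EuclideanSpace ℝ (Fin d) → ℝ)
    (γ : ℝ)
    (e : Ω → EuclideanSpace ℝ (Fin d)) (r : Ω → ℝ) (ξ : Ω → Ξ) (K : ℝ → ℝ)
    (x : EuclideanSpace ℝ (Fin d)) (Lβ : ℝ)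

private lemma step_fubini
    (hF_meas : Measurable (Function.uncurry F))
    (hF_int : ∀ x, Integrable (fun s => F x s) ν)
    (hf_def : ∀ x, f x = ∫ s, F x s ∂ν)
    (hf_cont : Continuous f)
    (he_meas : Measurable e) (hr_meas : Measurable r)
    (hξ_meas : Measurable ξ) (hξ_law : Measure.map ξ P = ν)
    (hξ_indep : IndepFun (fun ω => (e ω, r ω)) ξ P)
    (hK_meas : Measurable K)
    (hgF_int : Integrable (fun ω =>
      ((d : ℝ) / (2 * γ) * (F (x + (γ * r ω) • e ω) (ξ ω) - F (x - (γ * r ω) • e ω) (ξ ω))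
        * K (r ω)) • e ω) P) :
    (∫ ω, ((d : ℝ) / (2 * γ) * (F (x + (γ * r ω) • e ω) (ξ ω) - F (x - (γ * r ω) • e ω) (ξ ω))
        * K (r ω)) • e ω ∂P)
      = ∫ ω, ((d : ℝ) / (2 * γ) * (f (x + (γ * r ω) • e ω) - f (x - (γ * r ω) • e ω))
        * K (r ω)) • e ω ∂P
    ∧ Integrable (fun ω => ((d : ℝ) / (2 * γ) * (f (x + (γ * r ω) • e ω)
        - f (x - (γ * r ω) • e ω)) * K (r ω)) • e ω) P := by
  have hT : Measurable (fun ω => (e ω, r ω)) := he_meas.prodMk hr_meas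
  set μT := Measure.map (fun ω => (e ω, r ω)) P with hμT
  have hprod : Measure.map (fun ω => ((e ω, r ω), ξ ω)) P = μT.prod ν := by
    have := (indepFun_iff_map_prod_eq_prod_map_map hT.aemeasurable hξ_meas.aemeasurable).mp
      hξ_indep
    rw [hξ_law] at this
    exact this
  set G : (EuclideanSpace ℝ (Fin d) × ℝ) × Ξ → EuclideanSpace ℝ (Fin d) := fun p =>
    ((d : ℝ) / (2 * γ) * (F (x + (γ * p.1.2) • p.1.1) p.2 - F (x - (γ * p.1.2) • p.1.1) p.2)
      * K p.1.2) • p.1.1 with hG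
  have hmap1 : Measurable (fun p : (EuclideanSpace ℝ (Fin d) × ℝ) × Ξ =>
      x + (γ * p.1.2) • p.1.1) :=
    measurable_const.add ((measurable_const.mul (measurable_snd.comp measurable_fst)).smul
      (measurable_fst.comp measurable_fst))
  have hmap2 : Measurable (fun p : (EuclideanSpace ℝ (Fin d) × ℝ) × Ξ =>
      x - (γ * p.1.2) • p.1.1) :=
    measurable_const.sub ((measurable_const.mul (measurable_snd.comp measurable_fst)).smul
      (measurable_fst.comp measurable_fst))
  have hG_meas : Measurable G := by
    apply Measurable.fun_smul
    · apply Measurable.mul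
      · apply Measurable.mul measurable_const
        exact (hF_meas.comp (hmap1.prodMk measurable_snd)).sub
          (hF_meas.comp (hmap2.prodMk measurable_snd))
      · exact hK_meas.comp (measurable_snd.comp measurable_fst)
    · exact measurable_fst.comp measurable_fst
  have hpair : Measurable (fun ω => ((e ω, r ω), ξ ω)) := hT.prodMk hξ_meas
  have hGint : Integrable G (μT.prod ν) := by
    rw [← hprod]
    exact (integrable_map_measure hG_meas.aestronglyMeasurable hpair.aemeasurable).mpr hgF_int
  set H : EuclideanSpace ℝ (Fin d) × ℝ → EuclideanSpace ℝ (Fin d) := fun p =>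
    ((d : ℝ) / (2 * γ) * (f (x + (γ * p.2) • p.1) - f (x - (γ * p.2) • p.1)) * K p.2) • p.1
    with hH
  have hinner : ∀ p : EuclideanSpace ℝ (Fin d) × ℝ, (∫ s, G (p, s) ∂ν) = H p := by
    intro p
    rw [hG, hH]
    simp only
    rw [integral_smul_const]
    congr 1
    rw [integral_mul_const, integral_const_mul,
      integral_sub (hF_int _) (hF_int _), ← hf_def, ← hf_def]
  have hH_meas : Measurable H := by
    apply Measurable.fun_smul
    · apply Measurable.mul
      · apply Measurable.mul measurable_const
        have d1 : Continuous (fun p : EuclideanSpace ℝ (Fin d) × ℝ => x + (γ * p.2) • p.1) :=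
          continuous_const.add ((continuous_const.mul continuous_snd).smul continuous_fst)
        have d2 : Continuous (fun p : EuclideanSpace ℝ (Fin d) × ℝ => x - (γ * p.2) • p.1) :=
          continuous_const.sub ((continuous_const.mul continuous_snd).smul continuous_fst)
        have c1 : Continuous (fun p : EuclideanSpace ℝ (Fin d) × ℝ => f (x + (γ * p.2) • p.1)) :=
          hf_cont.comp d1
        have c2 : Continuous (fun p : EuclideanSpace ℝ (Fin d) × ℝ => f (x - (γ * p.2) • p.1)) :=
          hf_cont.comp d2
        exact (c1.sub c2).measurable
      · exact hK_meas.comp measurable_snd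
    · exact continuous_fst.measurable
  constructor
  · calc ∫ ω, ((d : ℝ) / (2 * γ) * (F (x + (γ * r ω) • e ω) (ξ ω)
          - F (x - (γ * r ω) • e ω) (ξ ω)) * K (r ω)) • e ω ∂P
        = ∫ ω, G ((e ω, r ω), ξ ω) ∂P := rfl
      _ = ∫ q, G q ∂(Measure.map (fun ω => ((e ω, r ω), ξ ω)) P) :=
          (integral_map hpair.aemeasurable hG_meas.aestronglyMeasurable).symm
      _ = ∫ q, G q ∂(μT.prod ν) := by rw [hprod]
      _ = ∫ p, ∫ s, G (p, s) ∂ν ∂μT := integral_prod G hGint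
      _ = ∫ p, H p ∂μT := integral_congr_ae (Filter.Eventually.of_forall hinner)
      _ = ∫ ω, H (e ω, r ω) ∂P := integral_map hT.aemeasurable hH_meas.aestronglyMeasurable
      _ = _ := rfl
  · have h1 : Integrable (fun p => ∫ s, G (p, s) ∂ν) μT := hGint.integral_prod_left
    have h2 : Integrable H μT := h1.congr (Filter.Eventually.of_forall hinner)
    exact (integrable_map_measure hH_meas.aestronglyMeasurable hT.aemeasurable).mp h2

private lemma step_taylor
    (hd : 0 < d) (hl1 : 1 ≤ l) (hβ : 2 ≤ β)
    (hγ : 0 < γ) (hLβ : 0 ≤ Lβ)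
    (hf : ContDiff ℝ (l : ℕ∞) f)
    (hHolder : ∀ x z : EuclideanSpace ℝ (Fin d),
      |f z - ∑ j ∈ Finset.range (l + 1),
          ((j.factorial : ℝ)⁻¹) * iteratedFDeriv ℝ j f x (fun _ => z - x)|
        ≤ Lβ * ‖z - x‖ ^ β)
    (he_meas : Measurable e) (he_norm : ∀ ω, ‖e ω‖ = 1)
    (hsphere : ∀ v : EuclideanSpace ℝ (Fin d),
      ∫ ω, (inner ℝ v (e ω) : ℝ) • e ω ∂P = (d : ℝ)⁻¹ • v)
    (hr_meas : Measurable r) (hrae : ∀ᵐ ω ∂P, |r ω| ≤ 1)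
    (hindep : IndepFun e r P)
    (hK_meas : Measurable K)
    (hK1 : ∫ ω, r ω * K (r ω) ∂P = 1)
    (hKj : ∀ j : ℕ, 2 ≤ j → j ≤ l → ∫ ω, (r ω) ^ j * K (r ω) ∂P = 0)
    (hKβ_int : Integrable (fun ω => |r ω| ^ β * |K (r ω)|) P)
    (hK_int : Integrable (fun ω => |K (r ω)|) P)
    (hgf_int : Integrable (fun ω => ((d : ℝ) / (2 * γ) * (f (x + (γ * r ω) • e ω)
        - f (x - (γ * r ω) • e ω)) * K (r ω)) • e ω) P) :
    ‖(∫ ω, ((d : ℝ) / (2 * γ) * (f (x + (γ * r ω) • e ω)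
        - f (x - (γ * r ω) • e ω)) * K (r ω)) • e ω ∂P) - gradient f x‖
      ≤ (∫ ω, |r ω| ^ β * |K (r ω)| ∂P) * d * Lβ * γ ^ (β - 1) := by
  classical
  set v := gradient f x with hv
  have hu_norm : ∀ ω, ‖(γ * r ω) • e ω‖ = γ * |r ω| := by
    intro ω
    rw [norm_smul, he_norm ω, mul_one, Real.norm_eq_abs, abs_mul, abs_of_pos hγ]
  set Ψ : ℕ → EuclideanSpace ℝ (Fin d) → ℝ :=
    fun j y => iteratedFDeriv ℝ j f x (fun _ => y) with hΨ
  have hΨc : ∀ j, Continuous (Ψ j) := by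
    intro j
    exact (iteratedFDeriv ℝ j f x).cont.comp (continuous_pi fun _ => continuous_id)
  have hΨb : ∀ j ω, |Ψ j (e ω)| ≤ ‖iteratedFDeriv ℝ j f x‖ := by
    intro j ω
    calc |Ψ j (e ω)| = ‖iteratedFDeriv ℝ j f x (fun _ => e ω)‖ := rfl
      _ ≤ ‖iteratedFDeriv ℝ j f x‖ * ∏ _i : Fin j, ‖e ω‖ :=
          (iteratedFDeriv ℝ j f x).le_opNorm _
      _ = ‖iteratedFDeriv ℝ j f x‖ := by simp [he_norm ω]
  have hΨsmul : ∀ j (c : ℝ) y, Ψ j (c • y) = c ^ j * Ψ j y := by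
    intro j c y
    have := (iteratedFDeriv ℝ j f x).map_smul_univ (fun _ : Fin j => c) (fun _ => y)
    simpa [Finset.prod_const, Finset.card_univ, Fintype.card_fin, smul_eq_mul] using this
  set ρ : Ω → ℝ := fun ω =>
    (f (x + (γ * r ω) • e ω) - ∑ j ∈ Finset.range (l + 1),
      ((j.factorial : ℝ)⁻¹) * Ψ j ((γ * r ω) • e ω))
    - (f (x - (γ * r ω) • e ω) - ∑ j ∈ Finset.range (l + 1),
      ((j.factorial : ℝ)⁻¹) * Ψ j (-((γ * r ω) • e ω))) with hρdef
  have hρ : ∀ ω, |ρ ω| ≤ 2 * Lβ * (γ * |r ω|) ^ β := by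
    intro ω
    have h1 := hHolder x (x + (γ * r ω) • e ω)
    have h2 := hHolder x (x - (γ * r ω) • e ω)
    rw [add_sub_cancel_left] at h1
    rw [sub_sub_cancel_left] at h2
    rw [hu_norm ω] at h1
    rw [norm_neg, hu_norm ω] at h2
    calc |ρ ω| ≤ |f (x + (γ * r ω) • e ω) - ∑ j ∈ Finset.range (l + 1),
          ((j.factorial : ℝ)⁻¹) * Ψ j ((γ * r ω) • e ω)|
        + |f (x - (γ * r ω) • e ω) - ∑ j ∈ Finset.range (l + 1),
          ((j.factorial : ℝ)⁻¹) * Ψ j (-((γ * r ω) • e ω))| := abs_sub _ _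
      _ ≤ Lβ * (γ * |r ω|) ^ β + Lβ * (γ * |r ω|) ^ β := add_le_add h1 h2
      _ = 2 * Lβ * (γ * |r ω|) ^ β := by ring
  have hTaylor : ∀ ω, f (x + (γ * r ω) • e ω) - f (x - (γ * r ω) • e ω)
      = (∑ j ∈ Finset.range (l + 1),
          ((j.factorial : ℝ)⁻¹) * ((1 - (-1 : ℝ) ^ j) * (γ * r ω) ^ j) * Ψ j (e ω)) + ρ ω := by
    intro ω
    have hterm : ∀ j, ((j.factorial : ℝ)⁻¹) * Ψ j ((γ * r ω) • e ω)
        - ((j.factorial : ℝ)⁻¹) * Ψ j (-((γ * r ω) • e ω))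
        = ((j.factorial : ℝ)⁻¹) * ((1 - (-1 : ℝ) ^ j) * (γ * r ω) ^ j) * Ψ j (e ω) := by
      intro j
      rw [show -((γ * r ω) • e ω) = (-(γ * r ω)) • e ω by rw [neg_smul]]
      rw [hΨsmul j (γ * r ω) (e ω), hΨsmul j (-(γ * r ω)) (e ω), neg_pow]
      ring
    have hsum : ∑ j ∈ Finset.range (l + 1),
        ((j.factorial : ℝ)⁻¹) * ((1 - (-1 : ℝ) ^ j) * (γ * r ω) ^ j) * Ψ j (e ω)
        = (∑ j ∈ Finset.range (l + 1), ((j.factorial : ℝ)⁻¹) * Ψ j ((γ * r ω) • e ω))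
          - ∑ j ∈ Finset.range (l + 1), ((j.factorial : ℝ)⁻¹) * Ψ j (-((γ * r ω) • e ω)) := by
      rw [← Finset.sum_sub_distrib]
      exact Finset.sum_congr rfl fun j _ => (hterm j).symm
    simp only [hρdef]
    rw [hsum]
    ring
  set A : ℕ → Ω → EuclideanSpace ℝ (Fin d) := fun j ω =>
    (((d : ℝ) / (2 * γ) * ((j.factorial : ℝ)⁻¹) * (1 - (-1 : ℝ) ^ j) * γ ^ j)
      * ((r ω) ^ j * K (r ω)) * Ψ j (e ω)) • e ω with hA
  set Rem : Ω → EuclideanSpace ℝ (Fin d) := fun ω =>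
    ((d : ℝ) / (2 * γ) * ρ ω * K (r ω)) • e ω with hRem
  have hdecomp : ∀ ω, ((d : ℝ) / (2 * γ) * (f (x + (γ * r ω) • e ω)
      - f (x - (γ * r ω) • e ω)) * K (r ω)) • e ω
      = (∑ j ∈ Finset.range (l + 1), A j ω) + Rem ω := by
    intro ω
    simp only [hA, hRem]
    rw [← Finset.sum_smul, ← add_smul]
    congr 1
    rw [hTaylor ω]
    rw [mul_add, add_mul, Finset.mul_sum, Finset.sum_mul]
    congr 1
    refine Finset.sum_congr rfl fun j _ => ?_
    rw [mul_pow]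
    ring
  have hrK_int : ∀ j : ℕ, Integrable (fun ω => (r ω) ^ j * K (r ω)) P := by
    intro j
    refine Integrable.mono' hK_int
      (((hr_meas.pow_const j).mul (hK_meas.comp hr_meas)).aestronglyMeasurable) ?_
    filter_upwards [hrae] with ω hω
    rw [Real.norm_eq_abs, abs_mul, abs_pow]
    calc |r ω| ^ j * |K (r ω)| ≤ 1 ^ j * |K (r ω)| := by
          apply mul_le_mul_of_nonneg_right (pow_le_pow_left₀ (abs_nonneg _) hω j) (abs_nonneg _)
      _ = |K (r ω)| := by rw [one_pow, one_mul]
  have hA_int : ∀ j : ℕ, Integrable (A j) P := by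
    intro j
    refine Integrable.mono' ((hK_int.const_mul
      (|(d : ℝ) / (2 * γ) * ((j.factorial : ℝ)⁻¹) * (1 - (-1 : ℝ) ^ j) * γ ^ j|
        * ‖iteratedFDeriv ℝ j f x‖))) ?_ ?_
    · apply AEStronglyMeasurable.fun_smul _ he_meas.aestronglyMeasurable
      exact (((measurable_const.mul ((hr_meas.pow_const j).mul
        (hK_meas.comp hr_meas))).mul ((hΨc j).measurable.comp he_meas))).aestronglyMeasurable
    · filter_upwards [hrae] with ω hω
      simp only [hA]
      rw [norm_smul, he_norm ω, mul_one, Real.norm_eq_abs]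
      refine abs_mul3_bound _ _ _ _ _ ?_ (hΨb j ω) (norm_nonneg _)
      rw [abs_mul, abs_pow]
      calc |r ω| ^ j * |K (r ω)| ≤ 1 ^ j * |K (r ω)| :=
            mul_le_mul_of_nonneg_right (pow_le_pow_left₀ (abs_nonneg _) hω j) (abs_nonneg _)
        _ = |K (r ω)| := by rw [one_pow, one_mul]
  have hRem_int : Integrable Rem P := by
    have h1 := hgf_int.sub (integrable_finset_sum (Finset.range (l+1)) (fun j _ => hA_int j))
    refine h1.congr (Filter.Eventually.of_forall fun ω => ?_)
    simp only [Pi.sub_apply]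
    rw [hdecomp ω]
    abel
  have hAcomp : ∀ j : ℕ, j ∈ Finset.range (l + 1) → j ≠ 1 → ∫ ω, A j ω ∂P = 0 := by
    intro j hjmem hj1
    rcases Nat.even_or_odd j with hje | hjo
    · have : ∀ ω, A j ω = 0 := by
        intro ω
        simp only [hA]
        rw [hje.neg_one_pow]
        simp
      simp only [this]
      exact integral_zero Ω _
    · have hj2 : 2 ≤ j := by
        rcases Nat.lt_or_ge j 2 with h | h
        · interval_cases j
          · exact absurd hjo (by simp)
          · exact absurd rfl hj1
        · exact h
      have hjl : j ≤ l := by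
        have := Finset.mem_range.mp hjmem
        omega
      have hint0 : ∫ ω, (r ω) ^ j * K (r ω) ∂P = 0 := hKj j hj2 hjl
      ext i
      rw [integral_euclid_coord (hA_int j) i]
      have hcoord : ∀ ω, A j ω i
          = ((d : ℝ) / (2 * γ) * ((j.factorial : ℝ)⁻¹) * (1 - (-1 : ℝ) ^ j) * γ ^ j)
            * (((fun t => t ^ j * K t) ∘ r) ω * ((fun y => Ψ j y * y i) ∘ e) ω) := by
        intro ω
        simp only [hA, Function.comp]
        rw [PiLp.smul_apply, smul_eq_mul]
        ring
      rw [integral_congr_ae (Filter.Eventually.of_forall hcoord), integral_const_mul]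
      have hYint : Integrable ((fun y => Ψ j y * y i) ∘ e) P := by
        refine Integrable.mono' (integrable_const (‖iteratedFDeriv ℝ j f x‖ * 1))
          (((hΨc j).mul (EuclideanSpace.proj (𝕜 := ℝ) i).continuous).measurable.comp
            he_meas).aestronglyMeasurable
          (Filter.Eventually.of_forall fun ω => ?_)
        rw [Function.comp, Real.norm_eq_abs, abs_mul]
        refine mul_le_mul (hΨb j ω) ?_ (abs_nonneg _) (norm_nonneg _)
        exact (euclid_coord_le_norm (e ω) i).trans (le_of_eq (he_norm ω))
      have hprod := (hindep.symm.comp ((measurable_id.pow_const j).mul hK_meas)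
        (((hΨc j).mul
          (EuclideanSpace.proj (𝕜 := ℝ) i).continuous).measurable)).integral_fun_mul_eq_mul_integral
        (hrK_int j).aestronglyMeasurable hYint.aestronglyMeasurable
      have : ∫ ω, ((fun t => t ^ j * K t) ∘ r) ω * ((fun y => Ψ j y * y i) ∘ e) ω ∂P
          = (∫ ω, (r ω) ^ j * K (r ω) ∂P) * ∫ ω, ((fun y => Ψ j y * y i) ∘ e) ω ∂P := hprod
      rw [this, hint0]
      simp
  have hgradInt : Integrable (fun ω => (inner ℝ v (e ω) : ℝ) • e ω) P := by
    refine Integrable.mono' (integrable_const ‖v‖)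
      ((((continuous_const.inner continuous_id).fun_smul
        continuous_id).measurable.comp he_meas).aestronglyMeasurable)
      (Filter.Eventually.of_forall fun ω => ?_)
    rw [norm_smul, he_norm ω, mul_one, Real.norm_eq_abs]
    calc |(inner ℝ v (e ω) : ℝ)| ≤ ‖v‖ * ‖e ω‖ := abs_real_inner_le_norm v (e ω)
      _ = ‖v‖ := by rw [he_norm ω, mul_one]
  have hΨ1 : ∀ y : EuclideanSpace ℝ (Fin d), Ψ 1 y = (inner ℝ v y : ℝ) := by
    intro y
    have h1 : Ψ 1 y = fderiv ℝ f x y := by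
      simp only [hΨ]
      rw [iteratedFDeriv_one_apply]
    rw [h1, hv, gradient]
    rw [InnerProductSpace.toDual_symm_apply]
  have hA1 : ∫ ω, A 1 ω ∂P = v := by
    ext i
    rw [integral_euclid_coord (hA_int 1) i]
    have hcoord : ∀ ω, A 1 ω i
        = ((d : ℝ) / (2 * γ) * ((Nat.factorial 1 : ℝ))⁻¹ * (1 - (-1 : ℝ) ^ 1) * γ ^ 1)
          * (((fun t => t ^ 1 * K t) ∘ r) ω * ((fun y => Ψ 1 y * y i) ∘ e) ω) := by
      intro ω
      simp only [hA, Function.comp]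
      rw [PiLp.smul_apply, smul_eq_mul]
      ring
    rw [integral_congr_ae (Filter.Eventually.of_forall hcoord), integral_const_mul]
    have hYint : Integrable ((fun y => Ψ 1 y * y i) ∘ e) P := by
      refine Integrable.mono' (integrable_const (‖iteratedFDeriv ℝ 1 f x‖ * 1))
        (((hΨc 1).mul (EuclideanSpace.proj (𝕜 := ℝ) i).continuous).measurable.comp
          he_meas).aestronglyMeasurable
        (Filter.Eventually.of_forall fun ω => ?_)
      rw [Function.comp, Real.norm_eq_abs, abs_mul]
      refine mul_le_mul (hΨb 1 ω) ?_ (abs_nonneg _) (norm_nonneg _)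
      exact (euclid_coord_le_norm (e ω) i).trans (le_of_eq (he_norm ω))
    have hprod := (hindep.symm.comp ((measurable_id.pow_const 1).mul hK_meas)
      (((hΨc 1).mul
        (EuclideanSpace.proj (𝕜 := ℝ) i).continuous).measurable)).integral_fun_mul_eq_mul_integral
      (hrK_int 1).aestronglyMeasurable hYint.aestronglyMeasurable
    have heq1 : ∫ ω, ((fun t => t ^ 1 * K t) ∘ r) ω * ((fun y => Ψ 1 y * y i) ∘ e) ω ∂P
        = (∫ ω, (r ω) ^ 1 * K (r ω) ∂P) * ∫ ω, ((fun y => Ψ 1 y * y i) ∘ e) ω ∂P := hprod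
    have hrK1 : ∫ ω, (r ω) ^ 1 * K (r ω) ∂P = 1 := by
      simpa [pow_one] using hK1
    have hYval : ∫ ω, ((fun y => Ψ 1 y * y i) ∘ e) ω ∂P = (d : ℝ)⁻¹ * v i := by
      have h2 : ∀ ω, ((fun y => Ψ 1 y * y i) ∘ e) ω = ((inner ℝ v (e ω) : ℝ) • e ω) i := by
        intro ω
        rw [Function.comp, hΨ1 (e ω), PiLp.smul_apply, smul_eq_mul]
      rw [integral_congr_ae (Filter.Eventually.of_forall h2)]
      rw [← integral_euclid_coord hgradInt i, hsphere v]
      rw [PiLp.smul_apply, smul_eq_mul]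
    rw [heq1, hrK1, hYval]
    have hdne : (d : ℝ) ≠ 0 := Nat.cast_ne_zero.mpr hd.ne'
    have hγne : γ ≠ 0 := hγ.ne'
    field_simp
    ring
  have hsumA : ∑ j ∈ Finset.range (l + 1), ∫ ω, A j ω ∂P = v := by
    rw [Finset.sum_eq_single_of_mem 1 (Finset.mem_range.mpr (by omega))
      (fun j hj hne => hAcomp j hj hne)]
    exact hA1
  have hsplit : (∫ ω, ((d : ℝ) / (2 * γ) * (f (x + (γ * r ω) • e ω)
      - f (x - (γ * r ω) • e ω)) * K (r ω)) • e ω ∂P) = v + ∫ ω, Rem ω ∂P := by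
    rw [integral_congr_ae (Filter.Eventually.of_forall hdecomp)]
    rw [integral_add (integrable_finset_sum _ (fun j _ => hA_int j)) hRem_int]
    rw [integral_finset_sum _ (fun j _ => hA_int j), hsumA]
  rw [hsplit, add_sub_cancel_left]
  have hγβ : γ ^ (β - 1) = γ ^ β / γ := by
    rw [Real.rpow_sub hγ, Real.rpow_one]
  have hbound : ∀ᵐ ω ∂P, ‖Rem ω‖
      ≤ ((d : ℝ) * Lβ * γ ^ (β - 1)) * (|r ω| ^ β * |K (r ω)|) := by
    refine Filter.Eventually.of_forall fun ω => ?_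
    simp only [hRem]
    rw [norm_smul, he_norm ω, mul_one, Real.norm_eq_abs]
    calc |(d : ℝ) / (2 * γ) * ρ ω * K (r ω)|
        = |(d : ℝ) / (2 * γ)| * |ρ ω| * |K (r ω)| := by rw [abs_mul, abs_mul]
      _ ≤ |(d : ℝ) / (2 * γ)| * (2 * Lβ * (γ * |r ω|) ^ β) * |K (r ω)| := by
          refine mul_le_mul_of_nonneg_right
            (mul_le_mul_of_nonneg_left (hρ ω) (abs_nonneg _)) (abs_nonneg _)
      _ = ((d : ℝ) * Lβ * γ ^ (β - 1)) * (|r ω| ^ β * |K (r ω)|) := by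
          rw [Real.mul_rpow hγ.le (abs_nonneg _)]
          rw [abs_of_nonneg (by positivity : (0:ℝ) ≤ (d : ℝ) / (2 * γ))]
          rw [hγβ]
          field_simp
  calc ‖∫ ω, Rem ω ∂P‖ ≤ ∫ ω, ((d : ℝ) * Lβ * γ ^ (β - 1)) * (|r ω| ^ β * |K (r ω)|) ∂P :=
        norm_integral_le_of_norm_le (hKβ_int.const_mul _) hbound
    _ = ((d : ℝ) * Lβ * γ ^ (β - 1)) * ∫ ω, |r ω| ^ β * |K (r ω)| ∂P := integral_const_mul _ _
    _ = (∫ ω, |r ω| ^ β * |K (r ω)| ∂P) * d * Lβ * γ ^ (β - 1) := by ring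

end Steps

/-- Bias bound for the two-point kernel-based gradient approximation of the
expectation `f(x) = E_ξ[F(x,ξ)]`, where `f` belongs to the Hölder class `F_β(L_β)`, both
evaluations use the same realization `ξ` (distributed according to `ν`, independent of `(e,r)`),
and the oracle carries bounded adversarial deterministic noise `δ` with `|δ| ≤ Δ`:
`‖E[g̃(x,ξ,e,r)] − ∇f(x)‖ ≤ κ_β d L_β γ^{β−1} + κ₁ d Δ / γ`. -/
theorem kernel_bias_two_point_feedback
    {Ω : Type*} {m0 : MeasurableSpace Ω} (P : Measure Ω) [IsProbabilityMeasure P]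
    {Ξ : Type*} [MeasurableSpace Ξ] (ν : Measure Ξ) [IsProbabilityMeasure ν]
    {d : ℕ} (β : ℝ) (l : ℕ) (hβ : 2 ≤ β) (hl : (l : ℝ) < β) (hl' : β ≤ (l : ℝ) + 1)
    (F : EuclideanSpace ℝ (Fin d) → Ξ → ℝ)
    (hF_meas : Measurable (Function.uncurry F))
    (hF_int : ∀ x, Integrable (fun s => F x s) ν)
    (f : EuclideanSpace ℝ (Fin d) → ℝ)
    (hf_def : ∀ x, f x = ∫ s, F x s ∂ν)
    (Lβ : ℝ)
    (hf : ContDiff ℝ (l : ℕ∞) f)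
    (hHolder : ∀ x z : EuclideanSpace ℝ (Fin d),
      |f z - ∑ j ∈ Finset.range (l + 1),
          ((j.factorial : ℝ)⁻¹) * iteratedFDeriv ℝ j f x (fun _ => z - x)|
        ≤ Lβ * ‖z - x‖ ^ β)
    (δ : EuclideanSpace ℝ (Fin d) → ℝ) (Δ : ℝ) (hδ_meas : Measurable δ)
    (hδ : ∀ x, |δ x| ≤ Δ)
    (γ : ℝ) (hγ : 0 < γ)
    (e : Ω → EuclideanSpace ℝ (Fin d)) (r : Ω → ℝ) (ξ : Ω → Ξ) (K : ℝ → ℝ)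
    (he_meas : Measurable e) (he_norm : ∀ ω, ‖e ω‖ = 1)
    (he_unif : ∀ O : EuclideanSpace ℝ (Fin d) ≃ₗᵢ[ℝ] EuclideanSpace ℝ (Fin d),
      Measure.map (fun ω => O (e ω)) P = Measure.map e P)
    (hr_meas : Measurable r)
    (hr_unif : Measure.map r P = (2⁻¹ : ℝ≥0∞) • volume.restrict (Set.Icc (-1 : ℝ) 1))
    (hindep : IndepFun e r P)
    (hξ_meas : Measurable ξ) (hξ_law : Measure.map ξ P = ν)
    (hξ_indep : IndepFun (fun ω => (e ω, r ω)) ξ P)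
    (hK_meas : Measurable K)
    (hK0 : ∫ ω, K (r ω) ∂P = 0)
    (hK1 : ∫ ω, r ω * K (r ω) ∂P = 1)
    (hKj : ∀ j : ℕ, 2 ≤ j → j ≤ l → ∫ ω, (r ω) ^ j * K (r ω) ∂P = 0)
    (hKβ_int : Integrable (fun ω => |r ω| ^ β * |K (r ω)|) P)
    (hK_int : Integrable (fun ω => |K (r ω)|) P)
    (x : EuclideanSpace ℝ (Fin d))
    (hg_int : Integrable (fun ω =>
      ((d : ℝ) / (2 * γ) *
          ((F (x + (γ * r ω) • e ω) (ξ ω) + δ (x + (γ * r ω) • e ω))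
            - (F (x - (γ * r ω) • e ω) (ξ ω) + δ (x - (γ * r ω) • e ω))) * K (r ω)) • e ω) P) :
    ‖(∫ ω, ((d : ℝ) / (2 * γ) *
          ((F (x + (γ * r ω) • e ω) (ξ ω) + δ (x + (γ * r ω) • e ω))
            - (F (x - (γ * r ω) • e ω) (ξ ω) + δ (x - (γ * r ω) • e ω))) * K (r ω)) • e ω ∂P)
        - gradient f x‖
      ≤ (∫ ω, |r ω| ^ β * |K (r ω)| ∂P) * d * Lβ * γ ^ (β - 1)
        + (∫ ω, |K (r ω)| ∂P) * d * Δ / γ := by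
  classical
  -- degenerate dimension
  rcases Nat.eq_zero_or_pos d with hd0 | hd
  · exfalso
    have hne : Nonempty Ω := by
      by_contra h
      rw [not_nonempty_iff] at h
      have h1 : (Set.univ : Set Ω) = ∅ := Set.univ_eq_empty_iff.mpr h
      have h2 := measure_univ (μ := P)
      rw [h1, measure_empty] at h2
      exact zero_ne_one h2
    obtain ⟨ω⟩ := hne
    have h1 := he_norm ω
    subst hd0
    have h0 : e ω = 0 := by ext i; exact i.elim0
    rw [h0, norm_zero] at h1
    norm_num at h1
  -- basic facts
  have hl1 : 1 ≤ l := by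
    have h1 : (1 : ℝ) ≤ (l : ℝ) := by linarith
    exact_mod_cast h1
  have hΔ0 : 0 ≤ Δ := le_trans (abs_nonneg _) (hδ x)
  have hLβ : 0 ≤ Lβ := by
    have h := hHolder x (x + EuclideanSpace.single (⟨0, hd⟩ : Fin d) (1:ℝ))
    rw [add_sub_cancel_left, EuclideanSpace.norm_single, norm_one, Real.one_rpow,
      mul_one] at h
    exact le_trans (abs_nonneg _) h
  have hf_cont : Continuous f := hf.continuous
  have hrae : ∀ᵐ ω ∂P, |r ω| ≤ 1 := by
    have hs : MeasurableSet {t : ℝ | |t| ≤ 1} :=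
      (isClosed_le continuous_abs continuous_const).measurableSet
    have h1 : ∀ᵐ t ∂(Measure.map r P), |t| ≤ 1 := by
      rw [hr_unif]
      refine Measure.ae_smul_measure ?_ _
      filter_upwards [ae_restrict_mem measurableSet_Icc] with t ht
      exact abs_le.mpr ⟨ht.1, ht.2⟩
    exact (ae_map_iff hr_meas.aemeasurable hs).mp h1
  have hsphere := sphere_vector_moment P e he_meas he_norm he_unif
  -- noise part
  set gδ : Ω → EuclideanSpace ℝ (Fin d) := fun ω =>
    ((d : ℝ) / (2 * γ) * (δ (x + (γ * r ω) • e ω) - δ (x - (γ * r ω) • e ω)) * K (r ω)) • e ω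
    with hgδ
  have hgδ_meas : AEStronglyMeasurable gδ P := by
    apply Measurable.aestronglyMeasurable
    apply Measurable.fun_smul _ he_meas
    apply Measurable.mul _ (hK_meas.comp hr_meas)
    apply Measurable.mul measurable_const
    exact (hδ_meas.comp (measurable_const.add ((measurable_const.mul hr_meas).smul
      he_meas))).sub (hδ_meas.comp (measurable_const.sub ((measurable_const.mul hr_meas).smul
      he_meas)))
  have hgδ_ptbound : ∀ ω, ‖gδ ω‖ ≤ ((d : ℝ) * Δ / γ) * |K (r ω)| := by
    intro ω
    simp only [hgδ]
    rw [norm_smul, he_norm ω, mul_one, Real.norm_eq_abs]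
    have hz : |δ (x + (γ * r ω) • e ω) - δ (x - (γ * r ω) • e ω)| ≤ 2 * Δ := by
      calc |δ (x + (γ * r ω) • e ω) - δ (x - (γ * r ω) • e ω)|
          ≤ |δ (x + (γ * r ω) • e ω)| + |δ (x - (γ * r ω) • e ω)| := abs_sub _ _
        _ ≤ Δ + Δ := add_le_add (hδ _) (hδ _)
        _ = 2 * Δ := by ring
    calc |(d : ℝ) / (2 * γ) * (δ (x + (γ * r ω) • e ω) - δ (x - (γ * r ω) • e ω)) * K (r ω)|
        = |(d : ℝ) / (2 * γ)| * |δ (x + (γ * r ω) • e ω) - δ (x - (γ * r ω) • e ω)|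
          * |K (r ω)| := by rw [abs_mul, abs_mul]
      _ ≤ |(d : ℝ) / (2 * γ)| * (2 * Δ) * |K (r ω)| :=
          mul_le_mul_of_nonneg_right (mul_le_mul_of_nonneg_left hz (abs_nonneg _)) (abs_nonneg _)
      _ = ((d : ℝ) * Δ / γ) * |K (r ω)| := by
          rw [abs_of_nonneg (by positivity : (0:ℝ) ≤ (d : ℝ) / (2 * γ))]
          field_simp
  have hgδ_int : Integrable gδ P := by
    refine Integrable.mono' (hK_int.const_mul ((d : ℝ) * Δ / γ)) hgδ_meas
      (Filter.Eventually.of_forall hgδ_ptbound)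
  have hgδ_norm : ‖∫ ω, gδ ω ∂P‖ ≤ (∫ ω, |K (r ω)| ∂P) * d * Δ / γ := by
    calc ‖∫ ω, gδ ω ∂P‖ ≤ ∫ ω, ((d : ℝ) * Δ / γ) * |K (r ω)| ∂P :=
          norm_integral_le_of_norm_le (hK_int.const_mul _)
            (Filter.Eventually.of_forall hgδ_ptbound)
      _ = ((d : ℝ) * Δ / γ) * ∫ ω, |K (r ω)| ∂P := integral_const_mul _ _
      _ = (∫ ω, |K (r ω)| ∂P) * d * Δ / γ := by ring
  -- split
  set gF : Ω → EuclideanSpace ℝ (Fin d) := fun ω =>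
    ((d : ℝ) / (2 * γ) * (F (x + (γ * r ω) • e ω) (ξ ω) - F (x - (γ * r ω) • e ω) (ξ ω))
      * K (r ω)) • e ω with hgF
  have hsplit : ∀ ω, ((d : ℝ) / (2 * γ) *
      ((F (x + (γ * r ω) • e ω) (ξ ω) + δ (x + (γ * r ω) • e ω))
        - (F (x - (γ * r ω) • e ω) (ξ ω) + δ (x - (γ * r ω) • e ω))) * K (r ω)) • e ω
      = gF ω + gδ ω := by
    intro ω
    simp only [hgF, hgδ]
    rw [← add_smul]
    congr 1
    ring
  have hgF_int : Integrable gF P := by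
    have h1 := hg_int.sub hgδ_int
    refine h1.congr (Filter.Eventually.of_forall fun ω => ?_)
    simp only [Pi.sub_apply]
    rw [hsplit ω]
    abel
  have hint_split : (∫ ω, ((d : ℝ) / (2 * γ) *
      ((F (x + (γ * r ω) • e ω) (ξ ω) + δ (x + (γ * r ω) • e ω))
        - (F (x - (γ * r ω) • e ω) (ξ ω) + δ (x - (γ * r ω) • e ω))) * K (r ω)) • e ω ∂P)
      = (∫ ω, gF ω ∂P) + ∫ ω, gδ ω ∂P := by
    rw [integral_congr_ae (Filter.Eventually.of_forall hsplit)]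
    exact integral_add hgF_int hgδ_int
  -- Fubini
  obtain ⟨hBF, hgf_int⟩ := step_fubini P ν F f γ e r ξ K x hF_meas hF_int hf_def hf_cont
    he_meas hr_meas hξ_meas hξ_law hξ_indep hK_meas hgF_int
  -- Taylor bound
  have hTbound := step_taylor P β l f γ e r K x Lβ hd hl1 hβ hγ hLβ hf hHolder he_meas he_norm
    hsphere hr_meas hrae hindep hK_meas hK1 hKj hKβ_int hK_int hgf_int
  -- combine
  have hfinal : (∫ ω, ((d : ℝ) / (2 * γ) *
      ((F (x + (γ * r ω) • e ω) (ξ ω) + δ (x + (γ * r ω) • e ω))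
        - (F (x - (γ * r ω) • e ω) (ξ ω) + δ (x - (γ * r ω) • e ω))) * K (r ω)) • e ω ∂P)
      - gradient f x
      = ((∫ ω, ((d : ℝ) / (2 * γ) * (f (x + (γ * r ω) • e ω) - f (x - (γ * r ω) • e ω))
          * K (r ω)) • e ω ∂P) - gradient f x) + ∫ ω, gδ ω ∂P := by
    rw [hint_split, hBF]
    abel
  rw [hfinal]
  calc ‖((∫ ω, ((d : ℝ) / (2 * γ) * (f (x + (γ * r ω) • e ω) - f (x - (γ * r ω) • e ω))
          * K (r ω)) • e ω ∂P) - gradient f x) + ∫ ω, gδ ω ∂P‖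
      ≤ ‖(∫ ω, ((d : ℝ) / (2 * γ) * (f (x + (γ * r ω) • e ω) - f (x - (γ * r ω) • e ω))
          * K (r ω)) • e ω ∂P) - gradient f x‖ + ‖∫ ω, gδ ω ∂P‖ := norm_add_le _ _
    _ ≤ (∫ ω, |r ω| ^ β * |K (r ω)| ∂P) * d * Lβ * γ ^ (β - 1)
        + (∫ ω, |K (r ω)| ∂P) * d * Δ / γ := add_le_add hTbound hgδ_norm
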